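/- arXiv:0812.1239 — 5 statements merged into one kernel-verified Lean document; each statement's English description precedes it below -/
import Mathlib

section
/- If a compact connected metric space (continuum) X is connected im kleinen at every point, then X is locally connected. -/
/-- If a continuum `X` (a nonempty compact connected metric space) is connected im
kleinen at every point, then `X` is locally connected. -/
theorem locallyConnected_of_connectedImKleinen {X : Type*} [MetricSpace X]
    [CompactSpace X] [ConnectedSpace X] [Nonempty X]
    (h : ∀ x : X, ∀ U : Set X, IsOpen U → x ∈ U →
      ∃ C : Set X, C ⊆ U ∧ IsConnected C ∧ x ∈ interior C) :
    LocallyConnectedSpace X := by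
  rw [locallyConnectedSpace_iff_connectedComponentIn_open]
  intro F hF x hxF
  rw [isOpen_iff_mem_nhds]
  intro y hy
  have hyF : y ∈ F := connectedComponentIn_subset F x hy
  obtain ⟨C, hCU, hCconn, hCint⟩ := h y F hF hyF
  have hyC : y ∈ C := interior_subset hCint
  have hsub : C ⊆ connectedComponentIn F y :=
    hCconn.isPreconnected.subset_connectedComponentIn hyC hCU
  rw [← connectedComponentIn_eq hy] at hsub
  exact Filter.mem_of_superset (isOpen_interior.mem_nhds hCint)
    (interior_subset.trans hsub)
end

section
/- Let J be a planar continuum with connected complement and empty interior, and let K₀, K₁, K₂, ... be a sequence of subcontinua of J such that K_i ∩ K_{i+1} ≠ ∅ for all i and such that intersections K_i ∩ K_j for |i - j| ≥ 2 can only be nonempty if they meet K_{i} ∩ K_{i+1}; suppose in addition that diam(K_i) → 0. Then the set of limit points of the sequence (K_i) (points x such that every neighborhood of x meets infinitely many K_i) is a connected set. -/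
open Set

/-- The intersection of a decreasing sequence of nonempty compact connected sets in a
T2 space is connected. -/
lemma isConnected_iInter_of_antitone {X : Type*} [TopologicalSpace X] [T2Space X]
    (C : ℕ → Set X) (hanti : Antitone C) (hc : ∀ n, IsCompact (C n))
    (hne : ∀ n, (C n).Nonempty) (hconn : ∀ n, IsPreconnected (C n)) :
    IsConnected (⋂ n, C n) := by
  have hclosed : ∀ n, IsClosed (C n) := fun n => (hc n).isClosed
  have hclI : IsClosed (⋂ n, C n) := isClosed_iInter hclosed
  have hsub : (⋂ n, C n) ⊆ C 0 := iInter_subset C 0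
  have hcI : IsCompact (⋂ n, C n) := (hc 0).of_isClosed_subset hclI hsub
  refine ⟨?_, ?_⟩
  · exact IsCompact.nonempty_iInter_of_directed_nonempty_isCompact_isClosed C
      hanti.directed_ge hne hc hclosed
  · intro U V hU hV hUV hCU hCV
    by_contra hcon
    rw [Set.not_nonempty_iff_eq_empty] at hcon
    set S := ⋂ n, C n with hS
    -- split the intersection into two pieces
    have hAB : S = (S \ V) ∪ (S \ U) := by
      ext x
      constructor
      · intro hx
        rcases hUV hx with h | h
        · left
          exact ⟨hx, fun hv => by
            have : x ∈ S ∩ (U ∩ V) := ⟨hx, h, hv⟩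
            simp [hcon] at this⟩
        · right
          exact ⟨hx, fun hu => by
            have : x ∈ S ∩ (U ∩ V) := ⟨hx, hu, h⟩
            simp [hcon] at this⟩
      · rintro (h | h) <;> exact h.1
    have hA : IsCompact (S \ V) := hcI.of_isClosed_subset (hclI.sdiff hV) diff_subset
    have hB : IsCompact (S \ U) := hcI.of_isClosed_subset (hclI.sdiff hU) diff_subset
    have hAne : (S \ V).Nonempty := by
      obtain ⟨x, hxS, hxU⟩ := hCU
      exact ⟨x, hxS, fun hv => by
        have : x ∈ S ∩ (U ∩ V) := ⟨hxS, hxU, hv⟩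
        simp [hcon] at this⟩
    have hBne : (S \ U).Nonempty := by
      obtain ⟨x, hxS, hxV⟩ := hCV
      exact ⟨x, hxS, fun hu => by
        have : x ∈ S ∩ (U ∩ V) := ⟨hxS, hu, hxV⟩
        simp [hcon] at this⟩
    have hdisj : Disjoint (S \ V) (S \ U) := by
      rw [Set.disjoint_left]
      rintro x ⟨hxS, hxV⟩ ⟨_, hxU⟩
      rcases hUV hxS with h | h
      exacts [hxU h, hxV h]
    obtain ⟨U', V', hU', hV', hAU', hBV', hU'V'⟩ :=
      SeparatedNhds.of_isCompact_isCompact hA hB hdisj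
    -- some `C n` is contained in `U' ∪ V'`
    have hScover : S ⊆ U' ∪ V' := by
      nth_rewrite 1 [hAB]
      exact Set.union_subset (hAU'.trans subset_union_left)
        (hBV'.trans subset_union_right)
    have hiInterD : ⋂ n, C n \ (U' ∪ V') = ∅ := by
      rw [Set.eq_empty_iff_forall_notMem]
      intro x hx
      have hxS : x ∈ S := Set.mem_iInter.2 fun n => (Set.mem_iInter.1 hx n).1
      exact (Set.mem_iInter.1 hx 0).2 (hScover hxS)
    have hex : ∃ n, C n \ (U' ∪ V') = ∅ := by
      by_contra hall
      push_neg at hall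
      have : (⋂ n, C n \ (U' ∪ V')).Nonempty :=
        IsCompact.nonempty_iInter_of_directed_nonempty_isCompact_isClosed _
          (fun m n => by
            obtain ⟨k, hk1, hk2⟩ := hanti.directed_ge m n
            exact ⟨k, Set.diff_subset_diff_left hk1, Set.diff_subset_diff_left hk2⟩)
          (fun n => hall n)
          (fun n => (hc n).of_isClosed_subset ((hclosed n).sdiff (hU'.union hV')) diff_subset)
          (fun n => (hclosed n).sdiff (hU'.union hV'))
      rw [hiInterD] at this
      exact this.ne_empty rfl
    obtain ⟨n, hn⟩ := hex
    have hCnsub : C n ⊆ U' ∪ V' := Set.diff_eq_empty.1 hn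
    have hSsub : S ⊆ C n := iInter_subset C n
    have hCnU' : (C n ∩ U').Nonempty := by
      obtain ⟨a, ha⟩ := hAne
      exact ⟨a, hSsub ha.1, hAU' ha⟩
    have hCnV' : (C n ∩ V').Nonempty := by
      obtain ⟨b, hb⟩ := hBne
      exact ⟨b, hSsub hb.1, hBV' hb⟩
    obtain ⟨x, _, hx⟩ := hconn n U' V' hU' hV' hCnsub hCnU' hCnV'
    exact (hU'V'.le_bot hx).elim

/-- Let `J ⊆ ℂ` be a continuum with connected complement and empty interior, and let
`K 0, K 1, …` be subcontinua of `J` with consecutive members intersecting, such that an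
intersection `K i ∩ K j` with `j ≥ i + 2` can only be nonempty if it meets `K i ∩ K (i+1)`,
and with `diam (K i) → 0`. Then the set of limit points of the sequence `(K i)` (the
points every neighborhood of which meets infinitely many of the `K i`) is a connected set. -/
theorem limit_set_of_chain_connected (J : Set ℂ)
    (hJc : IsCompact J) (hJconn : IsConnected J)
    (hJcomp : IsConnected Jᶜ) (hJint : interior J = ∅)
    (K : ℕ → Set ℂ)
    (hKJ : ∀ i, K i ⊆ J) (hKc : ∀ i, IsCompact (K i)) (hKconn : ∀ i, IsConnected (K i))
    (hchain : ∀ i, (K i ∩ K (i + 1)).Nonempty)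
    (hskip : ∀ i j, i + 2 ≤ j → (K i ∩ K j).Nonempty →
      ((K i ∩ K j) ∩ (K i ∩ K (i + 1))).Nonempty)
    (hdiam : Filter.Tendsto (fun i => EMetric.diam (K i)) Filter.atTop (nhds 0)) :
    IsConnected {x : ℂ | ∀ U ∈ nhds x, {i : ℕ | (K i ∩ U).Nonempty}.Infinite} := by
  -- The tail closures
  set T : ℕ → Set ℂ := fun N => closure (⋃ i, K (N + i)) with hT
  have hTanti : Antitone T := by
    intro N M hNM
    apply closure_mono
    apply Set.iUnion_subset
    intro i
    have : M + i = N + ((M - N) + i) := by omega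
    rw [this]
    exact Set.subset_iUnion (fun j => K (N + j)) ((M - N) + i)
  have hTsubJ : ∀ N, T N ⊆ J := by
    intro N
    have : (⋃ i, K (N + i)) ⊆ J := Set.iUnion_subset fun i => hKJ (N + i)
    exact (closure_mono this).trans (hJc.isClosed.closure_subset_iff.2 subset_rfl)
  have hTc : ∀ N, IsCompact (T N) := fun N =>
    hJc.of_isClosed_subset isClosed_closure (hTsubJ N)
  have hTne : ∀ N, (T N).Nonempty := fun N =>
    ((hKconn N).nonempty.mono ((Set.subset_iUnion (fun i => K (N + i)) 0).trans
      subset_closure)).mono (by exact subset_rfl)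
  have hTconn : ∀ N, IsPreconnected (T N) := by
    intro N
    apply IsPreconnected.closure
    apply IsPreconnected.iUnion_of_chain (fun i => (hKconn (N + i)).isPreconnected)
    intro i
    have := hchain (N + i)
    simpa [Order.succ_eq_add_one, Nat.add_assoc] using this
  -- the limit set equals the intersection of the tail closures
  have hLeq : {x : ℂ | ∀ U ∈ nhds x, {i : ℕ | (K i ∩ U).Nonempty}.Infinite} = ⋂ N, T N := by
    ext x
    simp only [Set.mem_setOf_eq, Set.mem_iInter, hT, mem_closure_iff_nhds]
    constructor
    · intro hx N U hU
      obtain ⟨i, hiS, hiN⟩ := (hx U hU).exists_gt N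
      obtain ⟨y, hy1, hy2⟩ := hiS
      have h1 : N + (i - N) = i := by omega
      refine ⟨y, hy2, Set.mem_iUnion.2 ⟨i - N, ?_⟩⟩
      rw [h1]
      exact hy1
    · intro hx U hU
      apply Set.infinite_of_not_bddAbove
      rintro ⟨N, hN⟩
      obtain ⟨y, hy1, hy2⟩ := hx (N + 1) U hU
      obtain ⟨i, hi⟩ := Set.mem_iUnion.1 hy2
      have : N + 1 + i ∈ {i : ℕ | (K i ∩ U).Nonempty} := ⟨y, hi, hy1⟩
      have := hN this
      omega
  rw [hLeq]
  exact isConnected_iInter_of_antitone T hTanti hTc hTne hTconn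
end

section
/- Let F ⊆ ℝ/ℤ be a nonempty closed set invariant under the doubling map σ (σ(F) ⊆ F) such that the orbit of every point of F is contained in the closed half-circle [α, α + 1/2] for some fixed α with 0 < α < 1/2. Then F has empty interior, i.e., F is nowhere dense in the circle. -/
lemma coe_eq_coe_circ {a b : ℝ} (h : (a : AddCircle (1:ℝ)) = b) : ∃ k : ℤ, b - a = k := by
  have := (QuotientAddGroup.eq_iff_sub_mem).1 h.symm
  rw [AddSubgroup.mem_zmultiples_iff] at this
  obtain ⟨k, hk⟩ := this
  exact ⟨k, by simpa [zsmul_eq_mul] using hk.symm⟩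

lemma iterate_double (n : ℕ) (x : AddCircle (1 : ℝ)) :
    (fun y : AddCircle (1 : ℝ) => y + y)^[n] x = (2 ^ n : ℕ) • x := by
  induction n with
  | zero => simp
  | succ n ih =>
    rw [Function.iterate_succ_apply', ih, pow_succ, mul_comm, mul_smul, two_smul]

/-- Let `F` be a nonempty closed subset of the circle `ℝ/ℤ`, invariant under the doubling
map `σ(x) = x + x`, such that the whole forward orbit of every point of `F` is contained
in the closed half-circle `[α, α + 1/2]` for some fixed `0 < α < 1/2`. Then `F` has empty
interior (`F` is nowhere dense in the circle). -/
theorem invariant_set_in_halfcircle_nowhere_dense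
    (F : Set (AddCircle (1 : ℝ))) (hFne : F.Nonempty) (hFcl : IsClosed F)
    (hFinv : (fun x => x + x) '' F ⊆ F)
    (α : ℝ) (hα0 : 0 < α) (hα1 : α < 1 / 2)
    (horb : ∀ x ∈ F, ∀ n : ℕ,
      (fun y : AddCircle (1 : ℝ) => y + y)^[n] x ∈
        (fun t : ℝ => (t : AddCircle (1 : ℝ))) '' Set.Icc α (α + 1 / 2)) :
    interior F = ∅ := by
  by_contra h
  obtain ⟨x, hx⟩ := Set.nonempty_iff_ne_empty.2 h
  obtain ⟨t, rfl⟩ := QuotientAddGroup.mk_surjective x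
  have hcont : Continuous (fun s : ℝ => (s : AddCircle (1 : ℝ))) :=
    AddCircle.continuous_mk' 1
  have hU : IsOpen ((fun s : ℝ => (s : AddCircle (1 : ℝ))) ⁻¹' interior F) :=
    isOpen_interior.preimage hcont
  obtain ⟨ε, hε, hball⟩ := Metric.isOpen_iff.1 hU t hx
  obtain ⟨n, hn⟩ := pow_unbounded_of_one_lt (1 / ε) (by norm_num : (1:ℝ) < 2)
  have h2n : (0:ℝ) < 2 ^ n := by positivity
  have hlt : 1 / (2 : ℝ) ^ n < ε := by
    rw [div_lt_iff₀ h2n, mul_comm]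
    exact (div_lt_iff₀ hε).1 hn
  set c : ℝ := α + 3 / 4 - 2 ^ n * t with hc
  set δ : ℝ := Int.fract c / 2 ^ n with hδdef
  have hδ0 : 0 ≤ δ := div_nonneg (Int.fract_nonneg c) h2n.le
  have hδ1 : δ < 1 / 2 ^ n := div_lt_div_of_pos_right (Int.fract_lt_one c) h2n
  have htmem : ((t + δ : ℝ) : AddCircle (1:ℝ)) ∈ F := by
    apply interior_subset
    apply hball
    rw [Metric.mem_ball, Real.dist_eq, add_sub_cancel_left, abs_of_nonneg hδ0]
    exact hδ1.trans hlt
  have hiter : (fun y : AddCircle (1 : ℝ) => y + y)^[n] ((t + δ : ℝ) : AddCircle (1:ℝ))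
      = ((α + 3/4 : ℝ) : AddCircle (1:ℝ)) := by
    rw [iterate_double, ← AddCircle.coe_nsmul]
    have key : (2^n : ℕ) • (t + δ : ℝ) = α + 3/4 + (-⌊c⌋ : ℤ) • (1:ℝ) := by
      rw [nsmul_eq_mul, zsmul_eq_mul]
      push_cast
      rw [hδdef, Int.fract, hc]
      field_simp
      ring
    rw [key, AddCircle.coe_add]
    have hz : (((-⌊c⌋ : ℤ) • (1:ℝ) : ℝ) : AddCircle (1:ℝ)) = 0 := by
      rw [AddCircle.coe_zsmul, AddCircle.coe_period (p := (1:ℝ)), smul_zero]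
    rw [hz, add_zero]
  have := horb _ htmem n
  rw [hiter] at this
  obtain ⟨s, hs, hseq⟩ := this
  obtain ⟨k, hk⟩ := coe_eq_coe_circ hseq
  have h1 : (k:ℝ) = α + 3/4 - s := by linarith [hk]
  have ha : (0:ℤ) < k := by exact_mod_cast (show (0:ℝ) < k by
    have := hs.2; rw [h1]; linarith)
  have hb : k < 1 := by exact_mod_cast (show (k:ℝ) < 1 by
    have := hs.1; rw [h1]; linarith)
  omega
end

section
/- Let G be a finite connected graph with vertex set A_n = σ₂^{-n}({1_∞}) (binary words of length n followed by 1_∞) in which two distinct sequences ī = i₀i₁... and j̄ = j₀j₁... are adjacent if and only if there exists k such that i_r = j_r for r < k, {i_k, j_k} = {0, 1}, and i_r = j_r = 1 for all r > k. Then G is a tree. -/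
/-- The one-sided shift on the space `{0,1}^ℕ` of binary sequences. -/
def binShift (s : ℕ → Bool) : ℕ → Bool := fun i => s (i + 1)

/-- The constant sequence of 1's. -/
def onesSeq : ℕ → Bool := fun _ => true

/-- The set `A n = σ₂⁻ⁿ({1_∞})`. -/
def shiftPreimOnes (n : ℕ) : Set (ℕ → Bool) := binShift^[n] ⁻¹' {onesSeq}

/-- The graph on `A n`: two distinct sequences `ī, j̄` are adjacent iff they agree
before some position `k`, differ at position `k` (i.e. `{i_k, j_k} = {0,1}`), and are
both constantly `1` after position `k`. -/
def pullbackGraph (n : ℕ) : SimpleGraph (shiftPreimOnes n) :=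
  SimpleGraph.fromRel (fun s t =>
    ∃ k : ℕ, (∀ r < k, (s : ℕ → Bool) r = (t : ℕ → Bool) r) ∧
      (s : ℕ → Bool) k ≠ (t : ℕ → Bool) k ∧
      ∀ r > k, (s : ℕ → Bool) r = true ∧ (t : ℕ → Bool) r = true)

lemma binShift_iterate (m : ℕ) (t : ℕ → Bool) (i : ℕ) :
    binShift^[m] t i = t (i + m) := by
  induction m generalizing t i with
  | zero => rfl
  | succ m ih =>
    rw [Function.iterate_succ_apply, ih]
    simp [binShift, Nat.add_comm, Nat.add_assoc, Nat.add_left_comm]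

lemma mem_shiftPreimOnes {n : ℕ} {s : ℕ → Bool} :
    s ∈ shiftPreimOnes n ↔ ∀ i, n ≤ i → s i = true := by
  constructor
  · intro hs i hi
    have h : binShift^[n] s = onesSeq := hs
    have := congrFun h (i - n)
    rw [binShift_iterate, Nat.sub_add_cancel hi] at this
    exact this
  · intro h
    show binShift^[n] s = onesSeq
    funext i
    rw [binShift_iterate]
    exact h _ (Nat.le_add_left _ _)

lemma pullbackGraph_adj_iff {n : ℕ} {s t : shiftPreimOnes n} :
    (pullbackGraph n).Adj s t ↔
      ∃ k : ℕ, (∀ r < k, (s : ℕ → Bool) r = (t : ℕ → Bool) r) ∧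
        (s : ℕ → Bool) k ≠ (t : ℕ → Bool) k ∧
        ∀ r > k, (s : ℕ → Bool) r = true ∧ (t : ℕ → Bool) r = true := by
  constructor
  · rintro ⟨hne, h | h⟩
    · exact h
    · obtain ⟨k, h1, h2, h3⟩ := h
      exact ⟨k, fun r hr => (h1 r hr).symm, fun h => h2 h.symm,
        fun r hr => ⟨(h3 r hr).2, (h3 r hr).1⟩⟩
  · rintro ⟨k, h1, h2, h3⟩
    refine ⟨?_, Or.inl ⟨k, h1, h2, h3⟩⟩
    intro he
    exact h2 (by rw [he])

/-- Two "edges at level `k`" with the same data are equal endpointwise. -/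
lemma pullbackGraph_rigid {n : ℕ} {s t u v : shiftPreimOnes n} {k : ℕ}
    (h1 : ∀ r < k, (s : ℕ → Bool) r = (t : ℕ → Bool) r)
    (hs : (s : ℕ → Bool) k = false) (ht : (t : ℕ → Bool) k = true)
    (h3 : ∀ r > k, (s : ℕ → Bool) r = true ∧ (t : ℕ → Bool) r = true)
    (g1 : ∀ r < k, (u : ℕ → Bool) r = (v : ℕ → Bool) r)
    (g2 : (u : ℕ → Bool) k ≠ (v : ℕ → Bool) k)
    (g3 : ∀ r > k, (u : ℕ → Bool) r = true ∧ (v : ℕ → Bool) r = true)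
    (hu : (u : ℕ → Bool) k = false)
    (hpre : ∀ r < k, (u : ℕ → Bool) r = (s : ℕ → Bool) r) :
    u = s ∧ v = t := by
  have hv : (v : ℕ → Bool) k = true := by
    rcases Bool.eq_false_or_eq_true ((v : ℕ → Bool) k) with h | h
    · exact h
    · exact absurd (by rw [hu, h]) g2
  constructor
  · apply Subtype.ext; funext r
    rcases lt_trichotomy r k with hr | hr | hr
    · exact hpre r hr
    · subst hr; rw [hu, hs]
    · rw [(g3 r hr).1, (h3 r hr).1]
  · apply Subtype.ext; funext r
    rcases lt_trichotomy r k with hr | hr | hr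
    · rw [← g1 r hr, hpre r hr, h1 r hr]
    · subst hr; rw [hv, ht]
    · rw [(g3 r hr).2, (h3 r hr).2]

/-- Deleting an edge disconnects its endpoints. -/
lemma pullbackGraph_not_reachable_delete {n : ℕ} {s t : shiftPreimOnes n} {k : ℕ}
    (h1 : ∀ r < k, (s : ℕ → Bool) r = (t : ℕ → Bool) r)
    (hs : (s : ℕ → Bool) k = false) (ht : (t : ℕ → Bool) k = true)
    (h3 : ∀ r > k, (s : ℕ → Bool) r = true ∧ (t : ℕ → Bool) r = true) :
    ¬ ((pullbackGraph n) \ SimpleGraph.fromEdgeSet {s(s, t)}).Reachable s t := by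
  set G' := (pullbackGraph n) \ SimpleGraph.fromEdgeSet {s(s, t)} with hG'
  have key : ∀ a b : shiftPreimOnes n, G'.Adj a b →
      (((a : ℕ → Bool) k = false ∧ ∀ r < k, (a : ℕ → Bool) r = (s : ℕ → Bool) r) ↔
       ((b : ℕ → Bool) k = false ∧ ∀ r < k, (b : ℕ → Bool) r = (s : ℕ → Bool) r)) := by
    intro a b hab
    obtain ⟨hadj, hne⟩ : (pullbackGraph n).Adj a b ∧
        ¬ (SimpleGraph.fromEdgeSet {s(s, t)}).Adj a b := hab
    have hne' : s(a, b) ≠ s(s, t) := by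
      intro h
      exact hne ⟨by simp [h], hadj.ne⟩
    obtain ⟨k', g1, g2, g3⟩ := pullbackGraph_adj_iff.mp hadj
    rcases lt_trichotomy k' k with hlt | heq | hgt
    · constructor
      · rintro ⟨hp1, _⟩
        rw [(g3 k hlt).1] at hp1
        exact absurd hp1 (by simp)
      · rintro ⟨hp1, _⟩
        rw [(g3 k hlt).2] at hp1
        exact absurd hp1 (by simp)
    · subst heq
      constructor
      · rintro ⟨hp1, hp2⟩
        obtain ⟨ha, hb⟩ := pullbackGraph_rigid h1 hs ht h3 g1 g2 g3 hp1 hp2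
        exact absurd (by rw [ha, hb]) hne'
      · rintro ⟨hp1, hp2⟩
        obtain ⟨hb, ha⟩ := pullbackGraph_rigid h1 hs ht h3
          (fun r hr => (g1 r hr).symm) (fun h => g2 h.symm)
          (fun r hr => ⟨(g3 r hr).2, (g3 r hr).1⟩) hp1 hp2
        exact absurd (by rw [ha, hb, Sym2.eq_swap]) hne'
    · have hk : (a : ℕ → Bool) k = (b : ℕ → Bool) k := g1 k hgt
      constructor
      · rintro ⟨hp1, hp2⟩
        exact ⟨by rw [← hk]; exact hp1,
          fun r hr => by rw [← g1 r (hr.trans hgt)]; exact hp2 r hr⟩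
      · rintro ⟨hp1, hp2⟩
        exact ⟨by rw [hk]; exact hp1,
          fun r hr => by rw [g1 r (hr.trans hgt)]; exact hp2 r hr⟩
  have hwalk : ∀ {x y : shiftPreimOnes n}, G'.Walk x y →
      (((x : ℕ → Bool) k = false ∧ ∀ r < k, (x : ℕ → Bool) r = (s : ℕ → Bool) r) ↔
       ((y : ℕ → Bool) k = false ∧ ∀ r < k, (y : ℕ → Bool) r = (s : ℕ → Bool) r)) := by
    intro x y w
    induction w with
    | nil => exact Iff.rfl
    | cons h _ ih => exact (key _ _ h).trans ih
  intro hr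
  obtain ⟨w⟩ := hr
  have := (hwalk w).mp ⟨hs, fun r _ => rfl⟩
  rw [ht] at this
  exact absurd this.1 (by simp)

lemma pullbackGraph_isAcyclic (n : ℕ) : (pullbackGraph n).IsAcyclic := by
  rw [SimpleGraph.isAcyclic_iff_forall_adj_isBridge]
  intro s t hadj
  rw [SimpleGraph.isBridge_iff]
  obtain ⟨k, h1, h2, h3⟩ := pullbackGraph_adj_iff.mp hadj
  rcases Bool.eq_false_or_eq_true ((s : ℕ → Bool) k) with hs | hs
  swap
  · have ht : (t : ℕ → Bool) k = true := by
      rcases Bool.eq_false_or_eq_true ((t : ℕ → Bool) k) with h | h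
      · exact h
      · exact absurd (by rw [hs, h]) h2
    exact pullbackGraph_not_reachable_delete h1 hs ht h3
  · have ht : (t : ℕ → Bool) k = false := by
      rcases Bool.eq_false_or_eq_true ((t : ℕ → Bool) k) with h | h
      · exact absurd (by rw [hs, h]) h2
      · exact h
    intro hr
    apply pullbackGraph_not_reachable_delete (fun r hr => (h1 r hr).symm) ht hs
      (fun r hr => ⟨(h3 r hr).2, (h3 r hr).1⟩)
    rw [Sym2.eq_swap]
    exact hr.symm

lemma onesSeq_mem (n : ℕ) : onesSeq ∈ shiftPreimOnes n :=
  mem_shiftPreimOnes.mpr (fun _ _ => rfl)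

/-- Every vertex reaches the all-ones sequence. -/
lemma pullbackGraph_reach_ones (n : ℕ) (a : shiftPreimOnes n) :
    (pullbackGraph n).Reachable a ⟨onesSeq, onesSeq_mem n⟩ := by
  set W : shiftPreimOnes n → ℕ :=
    fun a => ((Finset.range n).filter (fun i => (a : ℕ → Bool) i = false)).card with hW
  generalize hm : W a = m
  induction m using Nat.strong_induction_on generalizing a with
  | _ m ih =>
    by_cases hub : a = ⟨onesSeq, onesSeq_mem n⟩
    · rw [hub]
    · have hex : ∃ i ∈ Finset.range n, (a : ℕ → Bool) i = false := by
        by_contra hcon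
        push_neg at hcon
        apply hub
        apply Subtype.ext; funext i
        by_cases hi : i < n
        · have := hcon i (Finset.mem_range.mpr hi)
          show (a : ℕ → Bool) i = true
          rcases Bool.eq_false_or_eq_true ((a : ℕ → Bool) i) with h | h
          · exact h
          · exact absurd h this
        · exact mem_shiftPreimOnes.mp a.2 i (le_of_not_gt hi)
      set F := (Finset.range n).filter (fun i => (a : ℕ → Bool) i = false) with hF
      have hFne : F.Nonempty := by
        obtain ⟨i, hi1, hi2⟩ := hex
        exact ⟨i, Finset.mem_filter.mpr ⟨hi1, hi2⟩⟩
      set k := F.max' hFne with hk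
      have hkF : k ∈ F := F.max'_mem hFne
      have hak : (a : ℕ → Bool) k = false := (Finset.mem_filter.mp hkF).2
      have hatrue : ∀ r > k, (a : ℕ → Bool) r = true := by
        intro r hr
        by_cases hrn : r < n
        · rcases Bool.eq_false_or_eq_true ((a : ℕ → Bool) r) with h | h
          · exact h
          · exact absurd (F.le_max' r (Finset.mem_filter.mpr ⟨Finset.mem_range.mpr hrn, h⟩))
              (not_le.mpr hr)
        · exact mem_shiftPreimOnes.mp a.2 r (le_of_not_gt hrn)
      set p : ℕ → Bool := fun i => if i = k then true else (a : ℕ → Bool) i with hp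
      have hpmem : p ∈ shiftPreimOnes n := by
        rw [mem_shiftPreimOnes]
        intro i hi
        rw [hp]
        by_cases h : i = k
        · simp [h]
        · simp only [if_neg h]
          exact mem_shiftPreimOnes.mp a.2 i hi
      set b : shiftPreimOnes n := ⟨p, hpmem⟩ with hb
      have hadj : (pullbackGraph n).Adj a b := by
        rw [pullbackGraph_adj_iff]
        refine ⟨k, fun r hr => by simp [hb, hp, hr.ne], ?_, fun r hr => ?_⟩
        · rw [hak]
          show false ≠ (b : ℕ → Bool) k
          simp [hb, hp]
        · exact ⟨hatrue r hr, by
            show (if r = k then true else (a : ℕ → Bool) r) = true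
            rw [if_neg hr.ne', hatrue r hr]⟩
      have hWb : W b < m := by
        rw [← hm, hW]
        apply Finset.card_lt_card
        constructor
        · intro i hi
          rw [Finset.mem_filter] at hi ⊢
          refine ⟨hi.1, ?_⟩
          have h2 : (if i = k then true else (a : ℕ → Bool) i) = false := hi.2
          by_cases h : i = k
          · rw [if_pos h] at h2; exact absurd h2 (by simp)
          · rwa [if_neg h] at h2
        · intro hsub
          have := hsub (by rw [hF] at hkF; exact hkF)
          rw [Finset.mem_filter] at this
          have h2 : (if k = k then true else (a : ℕ → Bool) k) = false := this.2
          rw [if_pos rfl] at h2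
          exact absurd h2 (by simp)
      exact (hadj.reachable).trans (ih (W b) hWb b rfl)

/-- The graph on `A n = σ₂⁻ⁿ({1_∞})` given by the above adjacency is a tree. -/
theorem pullbackGraph_isTree (n : ℕ) : (pullbackGraph n).IsTree := by
  constructor
  · haveI : Nonempty (shiftPreimOnes n) := ⟨⟨onesSeq, onesSeq_mem n⟩⟩
    apply SimpleGraph.Connected.mk
    intro a b
    exact (pullbackGraph_reach_ones n a).trans (pullbackGraph_reach_ones n b).symm
  · exact pullbackGraph_isAcyclic n
end

section
/- Let X be a compact metric space, f : X → X continuous, and suppose (K_i)_{i≥0} is a sequence of nonempty compact connected subsets of X with K_i ∩ K_{i+1} ≠ ∅, f(K_{i+1}) = K_i, and diam(K_i) → 0. If f has only finitely many fixed points in X, then there is a fixed point a of f such that every sequence x_i ∈ K_i converges to a. -/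
open Metric Filter

private lemma aux_near {X : Type*} [MetricSpace X] [CompactSpace X] (f : X → X)
    (hf : Continuous f) {δ : ℝ} (hδ : 0 < δ) :
    ∃ ε > 0, ∀ x : X, dist x (f x) ≤ ε → ∃ a, f a = a ∧ dist x a < δ := by
  by_contra h
  push_neg at h
  have h' : ∀ n : ℕ, ∃ x : X, dist x (f x) ≤ 1/(n+1) ∧ ∀ a, f a = a → δ ≤ dist x a := by
    intro n
    obtain ⟨x, hx1, hx2⟩ := h (1/(n+1)) (by positivity)
    exact ⟨x, hx1, hx2⟩
  choose u hu1 hu2 using h'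
  obtain ⟨b, -, φ, hφ, hub⟩ := isCompact_univ.tendsto_subseq (fun n => Set.mem_univ (u n))
  have hfb : Tendsto (fun n => f (u (φ n))) atTop (nhds (f b)) :=
    (hf.tendsto b).comp hub
  have hd : Tendsto (fun n => dist (u (φ n)) (f (u (φ n)))) atTop (nhds (dist b (f b))) :=
    hub.dist hfb
  have h1 : Tendsto (fun n : ℕ => 1/((φ n : ℝ)+1)) atTop (nhds 0) :=
    tendsto_one_div_add_atTop_nhds_zero_nat.comp hφ.tendsto_atTop
  have hb0 : dist b (f b) ≤ 0 :=
    le_of_tendsto_of_tendsto hd h1 (Filter.Eventually.of_forall fun n => hu1 (φ n))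
  have hbfix : f b = b := by
    have hnn := dist_nonneg (x := b) (y := f b)
    have : dist b (f b) = 0 := le_antisymm hb0 hnn
    exact (dist_eq_zero.mp this).symm
  have hlim : Tendsto (fun n => dist (u (φ n)) b) atTop (nhds (dist b b)) :=
    hub.dist tendsto_const_nhds
  rw [dist_self] at hlim
  have : δ ≤ 0 := ge_of_tendsto hlim (Filter.Eventually.of_forall fun n => hu2 (φ n) b hbfix)
  linarith

private lemma aux_rho {X : Type*} [MetricSpace X] {F : Set X} (hF : F.Finite) :
    ∃ ρ > 0, ∀ a ∈ F, ∀ b ∈ F, dist a b < ρ → a = b := by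
  classical
  set s := hF.toFinset with hs
  set t := ((s ×ˢ s).filter fun p => p.1 ≠ p.2).image (fun p => dist p.1 p.2) with ht
  by_cases hne : t.Nonempty
  · refine ⟨t.min' hne, ?_, ?_⟩
    · obtain ⟨p, hp, hdp⟩ := Finset.mem_image.mp (t.min'_mem hne)
      rw [Finset.mem_filter] at hp
      rw [← hdp]
      exact dist_pos.mpr hp.2
    · intro a ha b hb hab
      by_contra hne2
      have hmem : dist a b ∈ t := Finset.mem_image.mpr
        ⟨(a, b), Finset.mem_filter.mpr ⟨Finset.mem_product.mpr
          ⟨hF.mem_toFinset.mpr ha, hF.mem_toFinset.mpr hb⟩, hne2⟩, rfl⟩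
      exact absurd (t.min'_le _ hmem) (not_le.mpr hab)
  · refine ⟨1, one_pos, fun a ha b hb _ => ?_⟩
    by_contra hne2
    exact hne ⟨dist a b, Finset.mem_image.mpr
      ⟨(a, b), Finset.mem_filter.mpr ⟨Finset.mem_product.mpr
        ⟨hF.mem_toFinset.mpr ha, hF.mem_toFinset.mpr hb⟩, hne2⟩, rfl⟩⟩

/-- Let `X` be a compact metric space and `f : X → X` continuous with only finitely many
fixed points. If `(K i)` is a chain of nonempty compact connected subsets with
`K i ∩ K (i+1) ≠ ∅`, `f (K (i+1)) = K i` and `diam (K i) → 0`, then there is a fixed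
point `a` of `f` such that every sequence of points `x i ∈ K i` converges to `a`. -/
theorem chain_converges_to_fixed_point_of_finite_fixed {X : Type*} [MetricSpace X]
    [CompactSpace X] (f : X → X) (hf : Continuous f)
    (hfix : {x : X | f x = x}.Finite)
    (K : ℕ → Set X)
    (hne : ∀ i, (K i).Nonempty) (hc : ∀ i, IsCompact (K i))
    (hconn : ∀ i, IsConnected (K i))
    (hchain : ∀ i, (K i ∩ K (i + 1)).Nonempty)
    (hmap : ∀ i, f '' K (i + 1) = K i)
    (hdiam : Filter.Tendsto (fun i => Metric.diam (K i)) Filter.atTop (nhds 0)) :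
    ∃ a : X, f a = a ∧
      ∀ x : ℕ → X, (∀ i, x i ∈ K i) →
        Filter.Tendsto x Filter.atTop (nhds a) := by
  have step1 : ∀ i, ∀ x ∈ K (i+1), dist x (f x) ≤ diam (K i) + diam (K (i+1)) := by
    intro i x hx
    obtain ⟨y, hy1, hy2⟩ := hchain i
    have hfx : f x ∈ K i := hmap i ▸ Set.mem_image_of_mem f hx
    calc dist x (f x) ≤ dist x y + dist y (f x) := dist_triangle _ _ _
      _ ≤ diam (K (i+1)) + diam (K i) :=
        add_le_add (dist_le_diam_of_mem (hc (i+1)).isBounded hx hy2)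
          (dist_le_diam_of_mem (hc i).isBounded hy1 hfx)
      _ = _ := add_comm _ _
  have hdsum : Tendsto (fun i => diam (K i) + diam (K (i+1))) atTop (nhds 0) := by
    have := hdiam.add (hdiam.comp (tendsto_add_atTop_nat 1))
    simpa using this
  have key : ∀ δ : ℝ, 0 < δ → ∃ N, ∀ i ≥ N, ∃ a, f a = a ∧ K i ⊆ ball a δ := by
    intro δ hδ
    obtain ⟨ε, hε, hεP⟩ := aux_near f hf (half_pos hδ)
    have E1 : ∀ᶠ i in atTop, diam (K i) + diam (K (i+1)) ≤ ε :=
      (hdsum.eventually_lt_const hε).mono fun i hi => le_of_lt hi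
    have E2 : ∀ᶠ i in atTop, diam (K i) < δ/2 := hdiam.eventually_lt_const (half_pos hδ)
    obtain ⟨N, hN⟩ := eventually_atTop.mp (E1.and E2)
    refine ⟨N + 1, fun i hi => ?_⟩
    obtain ⟨j, rfl⟩ : ∃ j, i = j + 1 := ⟨i - 1, by omega⟩
    have hj : N ≤ j := by omega
    have hsmall : ∀ x ∈ K (j+1), dist x (f x) ≤ ε := fun x hx =>
      le_trans (step1 j x hx) (hN j hj).1
    obtain ⟨x₀, hx₀⟩ := hne (j+1)
    obtain ⟨a, ha, hax₀⟩ := hεP x₀ (hsmall x₀ hx₀)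
    refine ⟨a, ha, fun x hx => ?_⟩
    have hd : dist x x₀ ≤ diam (K (j+1)) := dist_le_diam_of_mem (hc (j+1)).isBounded hx hx₀
    have hdj : diam (K (j+1)) < δ/2 := (hN (j+1) (by omega)).2
    rw [mem_ball]
    calc dist x a ≤ dist x x₀ + dist x₀ a := dist_triangle _ _ _
      _ < δ/2 + δ/2 := add_lt_add_of_le_of_lt (le_trans hd (le_of_lt hdj)) hax₀
      _ = δ := by ring
  obtain ⟨ρ, hρ, hρP⟩ := aux_rho hfix
  obtain ⟨N₀, hN₀⟩ := key (ρ/2) (half_pos hρ)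
  obtain ⟨a, ha, haK⟩ := hN₀ N₀ le_rfl
  have hball : ∀ i, N₀ ≤ i → K i ⊆ ball a (ρ/2) := by
    intro i hi
    induction i, hi using Nat.le_induction with
    | base => exact haK
    | succ n hn ih =>
      obtain ⟨b, hb, hbK⟩ := hN₀ (n+1) (by omega)
      obtain ⟨z, hz1, hz2⟩ := hchain n
      have hza : dist z a < ρ/2 := mem_ball.mp (ih hz1)
      have hzb : dist z b < ρ/2 := mem_ball.mp (hbK hz2)
      have hab : a = b := by
        apply hρP a ha b hb
        calc dist a b ≤ dist a z + dist z b := dist_triangle _ _ _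
          _ < ρ/2 + ρ/2 := add_lt_add (by rw [dist_comm]; exact hza) hzb
          _ = ρ := by ring
      rw [hab]
      exact hbK
  refine ⟨a, ha, fun x hx => ?_⟩
  rw [Metric.tendsto_atTop]
  intro ε hε
  obtain ⟨N₁, hN₁⟩ := key (min ε (ρ/2)) (lt_min hε (half_pos hρ))
  refine ⟨max N₀ N₁, fun i hi => ?_⟩
  obtain ⟨b, hb, hbK⟩ := hN₁ i (le_trans (le_max_right _ _) hi)
  have hib : dist (x i) b < min ε (ρ/2) := mem_ball.mp (hbK (hx i))
  have hia : dist (x i) a < ρ/2 :=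
    mem_ball.mp (hball i (le_trans (le_max_left _ _) hi) (hx i))
  have hab : a = b := by
    apply hρP a ha b hb
    calc dist a b ≤ dist a (x i) + dist (x i) b := dist_triangle _ _ _
      _ < ρ/2 + ρ/2 := add_lt_add (by rw [dist_comm]; exact hia)
          (lt_of_lt_of_le hib (min_le_right _ _))
      _ = ρ := by ring
  rw [hab]
  exact lt_of_lt_of_le hib (min_le_left _ _)
end
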